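/- Equivalence of the relative potential energy with the quadratic distance: Let a > 0, γ > 1, and define P(s) = as^γ and G(ρ) = ρ∫_{ρ̄}^{ρ} (P(s)−P(ρ̄))/s² ds for ρ, ρ̄ > 0. Then there exist constants c, C > 0 depending only on a and γ such that for every ρ̄ > 0 and every ρ ∈ [ρ̄/2, 3ρ̄/2], one has c ρ̄^{γ−2}(ρ−ρ̄)² ≤ G(ρ) ≤ C ρ̄^{γ−2}(ρ−ρ̄)². -/

import Mathlib

noncomputable section
open MeasureTheory Real Filter
open scoped ENNReal

/-- Three-dimensional Euclidean space. -/
abbrev E3 : Type := EuclideanSpace ℝ (Fin 3)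

namespace LC

/-- `i`-th partial derivative of a scalar field. -/
def pdS (i : Fin 3) (f : E3 → ℝ) (x : E3) : ℝ := fderiv ℝ f x (EuclideanSpace.single i 1)

/-- `i`-th partial derivative of a vector field. -/
def pdV (i : Fin 3) (f : E3 → E3) (x : E3) : E3 := fderiv ℝ f x (EuclideanSpace.single i 1)

/-- divergence of a vector field. -/
def div3 (u : E3 → E3) (x : E3) : ℝ := ∑ i, pdV i u x i

/-- componentwise Laplacian of a vector field. -/
def lapV (d : E3 → E3) (x : E3) : E3 := ∑ i, pdV i (pdV i d) x

/-- `|∇d|² = ∑_{i,j} (∂_i d^j)²`. -/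
def gradSq (d : E3 → E3) (x : E3) : ℝ := ∑ i, ‖pdV i d x‖ ^ 2

/-- deformation tensor `𝒟u = (∇u + (∇u)ᵀ)/2`. -/
def Dten (u : E3 → E3) (i j : Fin 3) (x : E3) : ℝ := (pdV i u x j + pdV j u x i) / 2

/-- Ericksen stress tensor `∇d⊙∇d − (1/2)|∇d|² I₃`. -/
def ericksen (d : E3 → E3) (i j : Fin 3) (x : E3) : ℝ :=
  (inner ℝ (pdV i d x) (pdV j d x) : ℝ) - (1 / 2) * gradSq d x * (if i = j then (1:ℝ) else 0)

/-- pointwise (Frobenius) norm of the first gradient of a vector field. -/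
def nrm1 (f : E3 → E3) (x : E3) : ℝ := Real.sqrt (∑ i, ‖pdV i f x‖ ^ 2)

/-- pointwise norm of the second gradient of a vector field. -/
def nrm2 (f : E3 → E3) (x : E3) : ℝ := Real.sqrt (∑ i, ∑ j, ‖pdV j (pdV i f) x‖ ^ 2)

/-- pointwise norm of the third gradient of a vector field. -/
def nrm3 (f : E3 → E3) (x : E3) : ℝ :=
  Real.sqrt (∑ i, ∑ j, ∑ k, ‖pdV k (pdV j (pdV i f)) x‖ ^ 2)

/-- pointwise norm of the gradient of a scalar field. -/
def snrm1 (f : E3 → ℝ) (x : E3) : ℝ := Real.sqrt (∑ i, (pdS i f x) ^ 2)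

/-- pointwise (Frobenius) norm of the deformation tensor. -/
def Dnrm (u : E3 → E3) (x : E3) : ℝ := Real.sqrt (∑ i, ∑ j, (Dten u i j x) ^ 2)

/-- real-valued `L^p` norm of a scalar field on `ℝ³`. -/
def lpR (p : ℝ≥0∞) (f : E3 → ℝ) : ℝ := (eLpNorm f p volume).toReal

/-- real-valued `L^p` norm of a vector field on `ℝ³`. -/
def lpV (p : ℝ≥0∞) (f : E3 → E3) : ℝ := (eLpNorm f p volume).toReal

/-- time derivative of a time-dependent vector field. -/
def ut (u : ℝ → E3 → E3) (t : ℝ) (x : E3) : E3 := deriv (fun τ => u τ x) t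

/-- time derivative of a time-dependent scalar field. -/
def rhot (ρ : ℝ → E3 → ℝ) (t : ℝ) (x : E3) : ℝ := deriv (fun τ => ρ τ x) t

/-- the potential energy `G(ρ) = ρ ∫_{ρ̄}^{ρ} (P(s) − P(ρ̄))/s² ds` for `P(s) = a s^γ`. -/
def Gfun (a γ ρbar r : ℝ) : ℝ := r * ∫ s in ρbar..r, (a * s ^ γ - a * ρbar ^ γ) / s ^ 2

/-- supremum over the time interval `[0,T]`. -/
def timeSup (T : ℝ) (f : ℝ → ℝ) : ℝ := sSup (f '' Set.Icc 0 T)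

/-- `E_d(T) = sup_{[0,T]} ‖∇d‖_{L³}`. -/
def Ed (T : ℝ) (d : ℝ → E3 → E3) : ℝ := timeSup T fun t => lpR 3 (nrm1 (d t))

/-- `E_{ρ,1}(T) = sup_{[0,T]} ‖ρ − ρ̄‖_{L^∞}`. -/
def Erho1 (T ρbar : ℝ) (ρ : ℝ → E3 → ℝ) : ℝ := timeSup T fun t => lpR ⊤ fun x => ρ t x - ρbar

/-- `sup_{[0,T]} ‖∇ρ‖_{L^p}² + ρ̄^{γ−α} ∫₀ᵀ ‖∇ρ‖_{L^p}² dt`. -/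
def ErhoP (p : ℝ≥0∞) (T γ α ρbar : ℝ) (ρ : ℝ → E3 → ℝ) : ℝ :=
  timeSup T (fun t => (lpR p (snrm1 (ρ t))) ^ 2) +
    ρbar ^ (γ - α) * ∫ t in (0:ℝ)..T, (lpR p (snrm1 (ρ t))) ^ 2

/-- `E_{u,1}(T)`. -/
def Eu1 (T μ₁ α ρbar : ℝ) (ρ : ℝ → E3 → ℝ) (u : ℝ → E3 → E3) : ℝ :=
  μ₁ * ρbar ^ α / (2:ℝ) ^ (α + 1) * timeSup T (fun t => (lpR 2 (nrm1 (u t))) ^ 2) +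
    (1 / 2) * ∫ t in (0:ℝ)..T, (lpV 2 fun x => Real.sqrt (ρ t x) • ut u t x) ^ 2

/-- `E_{u,2}(T)`. -/
def Eu2 (T μ₁ α ρbar : ℝ) (ρ : ℝ → E3 → ℝ) (u : ℝ → E3 → E3) : ℝ :=
  timeSup T (fun t => (lpV 2 fun x => Real.sqrt (ρ t x) • ut u t x) ^ 2) +
    μ₁ * ρbar ^ α / (2:ℝ) ^ (α + 1) * ∫ t in (0:ℝ)..T, (lpR 2 (nrm1 (ut u t))) ^ 2

/-- the constant `N₃ = 2μ₁‖𝒟u₀‖_{L²}² + μ₂‖div u₀‖_{L²}²`. -/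
def N3 (μ₁ μ₂ : ℝ) (u₀ : E3 → E3) : ℝ :=
  2 * μ₁ * (lpR 2 (Dnrm u₀)) ^ 2 + μ₂ * (lpR 2 (div3 u₀)) ^ 2

/-- The simplified Ericksen–Leslie system for compressible liquid crystal flows on `ℝ³`,
together with the constraint `|d| = 1` and the far-field conditions, holding at all
times in the set `s`. -/
structure IsSol (a γ μ₁ μ₂ ν lam α ρbar : ℝ) (e : E3)
    (ρ : ℝ → E3 → ℝ) (u d : ℝ → E3 → E3) (s : Set ℝ) : Prop where
  mass : ∀ t ∈ s, ∀ x : E3,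
    rhot ρ t x + (fderiv ℝ (ρ t) x (u t x) + ρ t x * div3 (u t) x) = 0
  momentum : ∀ t ∈ s, ∀ x : E3, ∀ j : Fin 3,
    deriv (fun τ => ρ τ x * u τ x j) t
      + (∑ i, pdS i (fun y => ρ t y * u t y i * u t y j) x)
      + pdS j (fun y => a * ρ t y ^ γ) x
      - ∑ i, pdS i (fun y => 2 * μ₁ * ρ t y ^ α * Dten (u t) i j y
          + μ₂ * ρ t y ^ α * div3 (u t) y * (if i = j then (1:ℝ) else 0)) x
    = -ν * ∑ i, pdS i (fun y => ericksen (d t) i j y) x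
  director : ∀ t ∈ s, ∀ x : E3,
    ut d t x + fderiv ℝ (d t) x (u t x)
      = lam • (lapV (d t) x + gradSq (d t) x • d t x)
  unit : ∀ t ∈ s, ∀ x : E3, ‖d t x‖ = 1
  farRho : ∀ t ∈ s, Tendsto (ρ t) (cocompact E3) (nhds ρbar)
  farU : ∀ t ∈ s, Tendsto (u t) (cocompact E3) (nhds 0)
  farD : ∀ t ∈ s, Tendsto (d t) (cocompact E3) (nhds e)

/-- joint smoothness in time and space of `(ρ, u, d)`. -/
def SmoothSol (ρ : ℝ → E3 → ℝ) (u d : ℝ → E3 → E3) : Prop :=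
  ContDiff ℝ (⊤ : ℕ∞) (fun p : ℝ × E3 => ρ p.1 p.2) ∧
  ContDiff ℝ (⊤ : ℕ∞) (fun p : ℝ × E3 => u p.1 p.2) ∧
  ContDiff ℝ (⊤ : ℕ∞) (fun p : ℝ × E3 => d p.1 p.2)

/-- the initial data assumptions (3/4)ρ̄ ≤ ρ₀ ≤ (5/4)ρ̄, ρ₀ − ρ̄ ∈ D^{1,2} ∩ D^{1,q},
G(ρ₀) ∈ L¹, u₀ ∈ H², d₀ − e ∈ H³, |d₀| = 1. -/
structure InitData (a γ ρbar q : ℝ) (e : E3) (ρ₀ : E3 → ℝ) (u₀ d₀ : E3 → E3) : Prop where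
  rho_low : ∀ x, 3 / 4 * ρbar ≤ ρ₀ x
  rho_high : ∀ x, ρ₀ x ≤ 5 / 4 * ρbar
  rho_D12 : MemLp (snrm1 fun x => ρ₀ x - ρbar) 2 volume
  rho_D1q : MemLp (snrm1 fun x => ρ₀ x - ρbar) (ENNReal.ofReal q) volume
  G_L1 : Integrable (fun x => Gfun a γ ρbar (ρ₀ x)) volume
  u_L2 : MemLp u₀ 2 volume
  u_D1 : MemLp (nrm1 u₀) 2 volume
  u_D2 : MemLp (nrm2 u₀) 2 volume
  d_L2 : MemLp (fun x => d₀ x - e) 2 volume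
  d_D1 : MemLp (nrm1 fun x => d₀ x - e) 2 volume
  d_D2 : MemLp (nrm2 fun x => d₀ x - e) 2 volume
  d_D3 : MemLp (nrm3 fun x => d₀ x - e) 2 volume
  d_unit : ∀ x, ‖d₀ x‖ = 1

end LC

open LC

private lemma mvt_rpow {γ : ℝ} (hγ : 1 < γ) {p q : ℝ} (hp : 0 < p) (hpq : p ≤ q) :
    γ * p ^ (γ-1) * (q - p) ≤ q ^ γ - p ^ γ ∧
    q ^ γ - p ^ γ ≤ γ * q ^ (γ-1) * (q - p) := by
  rcases eq_or_lt_of_le hpq with rfl | hlt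
  · simp
  have hcont : ContinuousOn (fun x : ℝ => x ^ γ) (Set.Icc p q) := fun x hx =>
    (Real.continuousAt_rpow_const x γ (Or.inl (ne_of_gt (lt_of_lt_of_le hp hx.1)))).continuousWithinAt
  have hderiv : ∀ x ∈ Set.Ioo p q, HasDerivAt (fun x : ℝ => x ^ γ) (γ * x ^ (γ-1)) x := by
    intro x hx
    simpa [mul_comm] using Real.hasDerivAt_rpow_const (x := x) (p := γ)
      (Or.inl (ne_of_gt (hp.trans hx.1)))
  obtain ⟨x, hx, hsl⟩ := exists_hasDerivAt_eq_slope (fun x : ℝ => x ^ γ) _ hlt hcont hderiv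
  rw [eq_div_iff (sub_ne_zero.mpr hlt.ne')] at hsl
  have hxp : p ^ (γ-1) ≤ x ^ (γ-1) := Real.rpow_le_rpow hp.le hx.1.le (by linarith)
  have hxq : x ^ (γ-1) ≤ q ^ (γ-1) := Real.rpow_le_rpow (hp.trans hx.1).le hx.2.le (by linarith)
  constructor
  · calc γ * p ^ (γ-1) * (q - p) ≤ γ * x ^ (γ-1) * (q - p) := by
          gcongr
      _ = q ^ γ - p ^ γ := hsl
  · calc q ^ γ - p ^ γ = γ * x ^ (γ-1) * (q - p) := hsl.symm
      _ ≤ γ * q ^ (γ-1) * (q - p) := by gcongr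

private lemma key_pow (γ ρb : ℝ) (hρ : 0 < ρb) (t : ℝ) :
    ρb ^ (γ - 1 - t) * ρb ^ t = ρb ^ (γ - 1) := by
  rw [← Real.rpow_add hρ]; ring_nf

private lemma key_pow2 (γ ρb : ℝ) (hρ : 0 < ρb) :
    ρb ^ (γ - 3) * ρb ^ (2:ℕ) = ρb ^ (γ - 1) := by
  rw [← Real.rpow_natCast ρb 2, ← Real.rpow_add hρ]; norm_num; ring_nf

private lemma key_mul (γ ρb k : ℝ) (hρ : 0 < ρb) (hk : 0 ≤ k) :
    (k * ρb) ^ (γ - 1) = k ^ (γ-1) * ρb ^ (γ-1) :=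
  Real.mul_rpow hk hρ.le

private lemma pt_up (a γ : ℝ) (ha : 0 < a) (hγ : 1 < γ) (ρb : ℝ) (hρ : 0 < ρb)
    (s : ℝ) (h1 : ρb ≤ s) (h2 : s ≤ 3*ρb/2) :
    a*γ*(1/2)^(γ-1)*(4/9)*ρb^(γ-3) * (s - ρb) ≤ (a*s^γ - a*ρb^γ)/s^2 ∧
    (a*s^γ - a*ρb^γ)/s^2 ≤ a*γ*(3/2)^(γ-1)*4*ρb^(γ-3) * (s - ρb) := by
  have hγ0 : (0:ℝ) < γ := by linarith
  have hs : 0 < s := lt_of_lt_of_le hρ h1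
  have hs2 : (0:ℝ) < s ^ 2 := by positivity
  have hd : 0 ≤ s - ρb := by linarith
  obtain ⟨hm1, hm2⟩ := mvt_rpow hγ hρ h1
  have hsle : s ^ (γ-1) ≤ (3/2)^(γ-1) * ρb^(γ-1) := by
    rw [← key_mul γ ρb (3/2) hρ (by norm_num)]
    exact Real.rpow_le_rpow hs.le (by linarith) (by linarith)
  have hhalf : (1/2:ℝ)^(γ-1) * ρb^(γ-1) ≤ ρb^(γ-1) := by
    rw [← key_mul γ ρb (1/2) hρ (by norm_num)]
    exact Real.rpow_le_rpow (by linarith) (by linarith) (by linarith)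
  have hRpos : (0:ℝ) < ρb ^ (γ-1) := Real.rpow_pos_of_pos hρ _
  have hR3pos : (0:ℝ) < ρb ^ (γ-3) := Real.rpow_pos_of_pos hρ _
  have hkey := key_pow2 γ ρb hρ
  constructor
  · rw [le_div_iff₀ hs2]
    calc a*γ*(1/2)^(γ-1)*(4/9)*ρb^(γ-3) * (s - ρb) * s^2
        ≤ a*γ*(1/2)^(γ-1)*(4/9)*ρb^(γ-3) * (s - ρb) * ((9/4) * ρb^(2:ℕ)) := by
          apply mul_le_mul_of_nonneg_left _ (by positivity)
          push_cast; nlinarith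
      _ = a*γ*((1/2)^(γ-1) * ρb^(γ-1)) * (s - ρb) := by
          rw [← hkey]; ring
      _ ≤ a*γ*ρb^(γ-1) * (s - ρb) := by
          apply mul_le_mul_of_nonneg_right _ hd
          apply mul_le_mul_of_nonneg_left hhalf (by positivity)
      _ = a * (γ*ρb^(γ-1) * (s - ρb)) := by ring
      _ ≤ a * (s^γ - ρb^γ) := by
          apply mul_le_mul_of_nonneg_left _ ha.le
          calc γ*ρb^(γ-1) * (s - ρb) = γ*ρb^(γ-1) * (s - ρb) := rfl
            _ ≤ s^γ - ρb^γ := hm1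
      _ = a*s^γ - a*ρb^γ := by ring
  · rw [div_le_iff₀ hs2]
    calc a*s^γ - a*ρb^γ = a * (s^γ - ρb^γ) := by ring
      _ ≤ a * (γ * s^(γ-1) * (s-ρb)) := mul_le_mul_of_nonneg_left hm2 ha.le
      _ ≤ a * (γ * ((3/2)^(γ-1) * ρb^(γ-1)) * (s-ρb)) := by
          apply mul_le_mul_of_nonneg_left _ ha.le
          apply mul_le_mul_of_nonneg_right _ hd
          apply mul_le_mul_of_nonneg_left hsle hγ0.le
      _ = a*γ*(3/2)^(γ-1)*4*ρb^(γ-3) * (s - ρb) * ((1/4) * ρb^(2:ℕ)) := by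
          rw [← hkey]; ring
      _ ≤ a*γ*(3/2)^(γ-1)*4*ρb^(γ-3) * (s - ρb) * s^2 := by
          apply mul_le_mul_of_nonneg_left _ (by positivity)
          push_cast; nlinarith

private lemma pt_down (a γ : ℝ) (ha : 0 < a) (hγ : 1 < γ) (ρb : ℝ) (hρ : 0 < ρb)
    (s : ℝ) (h1 : ρb/2 ≤ s) (h2 : s ≤ ρb) :
    a*γ*(3/2)^(γ-1)*4*ρb^(γ-3) * (s - ρb) ≤ (a*s^γ - a*ρb^γ)/s^2 ∧
    (a*s^γ - a*ρb^γ)/s^2 ≤ a*γ*(1/2)^(γ-1)*(4/9)*ρb^(γ-3) * (s - ρb) := by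
  have hγ0 : (0:ℝ) < γ := by linarith
  have hs : 0 < s := by linarith
  have hs2 : (0:ℝ) < s ^ 2 := by positivity
  have hd : 0 ≤ ρb - s := by linarith
  obtain ⟨hm1, hm2⟩ := mvt_rpow hγ hs h2
  -- hm1 : γ * s^(γ-1) * (ρb - s) ≤ ρb^γ - s^γ
  -- hm2 : ρb^γ - s^γ ≤ γ * ρb^(γ-1) * (ρb - s)
  have hsge : (1/2:ℝ)^(γ-1) * ρb^(γ-1) ≤ s ^ (γ-1) := by
    rw [← key_mul γ ρb (1/2) hρ (by norm_num)]
    exact Real.rpow_le_rpow (by linarith) (by linarith) (by linarith)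
  have hup : ρb^(γ-1) ≤ (3/2:ℝ)^(γ-1) * ρb^(γ-1) := by
    rw [← key_mul γ ρb (3/2) hρ (by norm_num)]
    exact Real.rpow_le_rpow hρ.le (by linarith) (by linarith)
  have hRpos : (0:ℝ) < ρb ^ (γ-1) := Real.rpow_pos_of_pos hρ _
  have hR3pos : (0:ℝ) < ρb ^ (γ-3) := Real.rpow_pos_of_pos hρ _
  have hkey := key_pow2 γ ρb hρ
  constructor
  · rw [le_div_iff₀ hs2, show a*s^γ - a*ρb^γ = -(a * (ρb^γ - s^γ)) by ring,
      show a*γ*(3/2)^(γ-1)*4*ρb^(γ-3) * (s - ρb) * s^2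
        = -(a*γ*(3/2)^(γ-1)*4*ρb^(γ-3) * (ρb - s) * s^2) by ring, neg_le_neg_iff]
    calc a * (ρb^γ - s^γ) ≤ a * (γ * ρb^(γ-1) * (ρb - s)) := mul_le_mul_of_nonneg_left hm2 ha.le
      _ ≤ a * (γ * ((3/2)^(γ-1) * ρb^(γ-1)) * (ρb - s)) := by
          apply mul_le_mul_of_nonneg_left _ ha.le
          apply mul_le_mul_of_nonneg_right _ hd
          apply mul_le_mul_of_nonneg_left hup hγ0.le
      _ = a*γ*(3/2)^(γ-1)*4*ρb^(γ-3) * (ρb - s) * ((1/4) * ρb^(2:ℕ)) := by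
          rw [← hkey]; ring
      _ ≤ a*γ*(3/2)^(γ-1)*4*ρb^(γ-3) * (ρb - s) * s^2 := by
          apply mul_le_mul_of_nonneg_left _ (by positivity)
          nlinarith
  · rw [div_le_iff₀ hs2, show a*s^γ - a*ρb^γ = -(a * (ρb^γ - s^γ)) by ring,
      show a*γ*(1/2)^(γ-1)*(4/9)*ρb^(γ-3) * (s - ρb) * s^2
        = -(a*γ*(1/2)^(γ-1)*(4/9)*ρb^(γ-3) * (ρb - s) * s^2) by ring, neg_le_neg_iff]
    calc a*γ*(1/2)^(γ-1)*(4/9)*ρb^(γ-3) * (ρb - s) * s^2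
        ≤ a*γ*(1/2)^(γ-1)*(4/9)*ρb^(γ-3) * (ρb - s) * ((9/4) * ρb^(2:ℕ)) := by
          apply mul_le_mul_of_nonneg_left _ (by positivity)
          nlinarith
      _ = a * (γ * ((1/2)^(γ-1) * ρb^(γ-1)) * (ρb - s)) := by rw [← hkey]; ring
      _ ≤ a * (γ * s^(γ-1) * (ρb - s)) := by
          apply mul_le_mul_of_nonneg_left _ ha.le
          apply mul_le_mul_of_nonneg_right _ hd
          apply mul_le_mul_of_nonneg_left hsge hγ0.le
      _ ≤ a * (ρb^γ - s^γ) := mul_le_mul_of_nonneg_left hm1 ha.le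

private lemma lin_integral (K c p q : ℝ) :
    ∫ s in p..q, K * (s - c) = K * ((q-c)^2 - (p-c)^2) / 2 := by
  rw [intervalIntegral.integral_const_mul,
    intervalIntegral.integral_sub intervalIntegral.intervalIntegrable_id (intervalIntegrable_const : IntervalIntegrable (fun _ => c) volume p q),
    integral_id, intervalIntegral.integral_const]
  simp only [smul_eq_mul]
  ring

/-- Equivalence of the relative potential energy with the quadratic
distance: for `a > 0`, `γ > 1`, there exist `c, C > 0` depending only on `a` and `γ` such
that for every `ρ̄ > 0` and every `ρ ∈ [ρ̄/2, 3ρ̄/2]`,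
`c ρ̄^{γ−2}(ρ−ρ̄)² ≤ G(ρ) ≤ C ρ̄^{γ−2}(ρ−ρ̄)²`. -/
theorem G_equivalence (a γ : ℝ) (ha : 0 < a) (hγ : 1 < γ) :
    ∃ c > (0:ℝ), ∃ C > (0:ℝ), ∀ ρbar > (0:ℝ), ∀ r : ℝ, ρbar / 2 ≤ r → r ≤ 3 * ρbar / 2 →
      c * ρbar ^ (γ - 2) * (r - ρbar) ^ 2 ≤ Gfun a γ ρbar r ∧
      Gfun a γ ρbar r ≤ C * ρbar ^ (γ - 2) * (r - ρbar) ^ 2 := by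
  have hγ0 : (0:ℝ) < γ := by linarith
  have hP2 : (0:ℝ) < (1/2:ℝ)^(γ-1) := Real.rpow_pos_of_pos (by norm_num) _
  have hP3 : (0:ℝ) < (3/2:ℝ)^(γ-1) := Real.rpow_pos_of_pos (by norm_num) _
  refine ⟨a*γ*(1/2)^(γ-1)/9, by positivity, 3*a*γ*(3/2)^(γ-1), by positivity, ?_⟩
  intro ρb hρ r hr1 hr2
  have hr0 : 0 < r := by linarith
  set m' : ℝ := a*γ*(1/2)^(γ-1)*(4/9)*ρb^(γ-3) with hm'
  set M' : ℝ := a*γ*(3/2)^(γ-1)*4*ρb^(γ-3) with hM'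
  have hR3pos : (0:ℝ) < ρb ^ (γ-3) := Real.rpow_pos_of_pos hρ _
  have hm'pos : 0 < m' := by positivity
  have hM'pos : 0 < M' := by positivity
  -- integrability of the integrand
  set f : ℝ → ℝ := fun s => (a * s ^ γ - a * ρb ^ γ) / s ^ 2 with hf
  have hcontnum : Continuous fun s : ℝ => a * s ^ γ - a * ρb ^ γ := by
    have h1 : Continuous fun s : ℝ => s ^ γ :=
      continuous_iff_continuousAt.2 fun x => Real.continuousAt_rpow_const x γ (Or.inr hγ0.le)
    exact (continuous_const.mul h1).sub continuous_const
  have hcontf : ∀ p q : ℝ, ρb/2 ≤ p → ρb/2 ≤ q → ContinuousOn f (Set.uIcc p q) := by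
    intro p q hp hq
    apply ContinuousOn.div hcontnum.continuousOn (continuous_pow 2).continuousOn
    intro x hx
    have hx0 : 0 < x := by have := le_trans (le_min hp hq) hx.1; linarith
    exact pow_ne_zero 2 hx0.ne'
  have hintf : ∀ p q : ℝ, ρb/2 ≤ p → ρb/2 ≤ q → IntervalIntegrable f volume p q :=
    fun p q hp hq => (hcontf p q hp hq).intervalIntegrable
  have hintlin : ∀ K p q : ℝ, IntervalIntegrable (fun s => K * (s - ρb)) volume p q :=
    fun K p q => (by continuity : Continuous fun s : ℝ => K * (s - ρb)).intervalIntegrable p q 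
  have hρhalf : ρb/2 ≤ ρb := by linarith
  -- bounds on the integral
  have hI : m' * (r - ρb)^2/2 ≤ (∫ s in ρb..r, f s) ∧
      (∫ s in ρb..r, f s) ≤ M' * (r - ρb)^2/2 := by
    rcases le_total ρb r with hord | hord
    · constructor
      · calc m' * (r - ρb)^2/2 = ∫ s in ρb..r, m' * (s - ρb) := by
              rw [lin_integral]; ring
          _ ≤ ∫ s in ρb..r, f s := by
              apply intervalIntegral.integral_mono_on hord (hintlin m' ρb r)
                (hintf ρb r hρhalf hr1)
              intro s hs
              exact (pt_up a γ ha hγ ρb hρ s hs.1 (le_trans hs.2 hr2)).1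
      · calc (∫ s in ρb..r, f s) ≤ ∫ s in ρb..r, M' * (s - ρb) := by
              apply intervalIntegral.integral_mono_on hord (hintf ρb r hρhalf hr1)
                (hintlin M' ρb r)
              intro s hs
              exact (pt_up a γ ha hγ ρb hρ s hs.1 (le_trans hs.2 hr2)).2
          _ = M' * (r - ρb)^2/2 := by rw [lin_integral]; ring
    · rw [intervalIntegral.integral_symm]
      constructor
      · rw [le_neg]
        calc (∫ s in r..ρb, f s) ≤ ∫ s in r..ρb, m' * (s - ρb) := by
              apply intervalIntegral.integral_mono_on hord (hintf r ρb hr1 hρhalf)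
                (hintlin m' r ρb)
              intro s hs
              exact (pt_down a γ ha hγ ρb hρ s (le_trans hr1 hs.1) hs.2).2
          _ = -(m' * (r - ρb)^2/2) := by rw [lin_integral]; ring
      · rw [neg_le]
        calc -(M' * (r - ρb)^2/2) = ∫ s in r..ρb, M' * (s - ρb) := by
              rw [lin_integral]; ring
          _ ≤ ∫ s in r..ρb, f s := by
              apply intervalIntegral.integral_mono_on hord (hintlin M' r ρb)
                (hintf r ρb hr1 hρhalf)
              intro s hs
              exact (pt_down a γ ha hγ ρb hρ s (le_trans hr1 hs.1) hs.2).1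
  obtain ⟨hIlo, hIhi⟩ := hI
  have hIlo0 : 0 ≤ m' * (r - ρb)^2/2 := by positivity
  have hkey : ρb ^ (γ-3) * ρb = ρb ^ (γ-2) := by
    nth_rewrite 2 [← Real.rpow_one ρb]
    rw [← Real.rpow_add hρ]
    ring_nf
  constructor
  · show a*γ*(1/2)^(γ-1)/9 * ρb ^ (γ - 2) * (r - ρb) ^ 2 ≤ r * ∫ s in ρb..r, f s
    calc a*γ*(1/2)^(γ-1)/9 * ρb ^ (γ-2) * (r - ρb)^2
        = (ρb/2) * (m' * (r - ρb)^2/2) := by rw [← hkey]; ring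
      _ ≤ r * (m' * (r - ρb)^2/2) := mul_le_mul_of_nonneg_right hr1 hIlo0
      _ ≤ r * ∫ s in ρb..r, f s := mul_le_mul_of_nonneg_left hIlo hr0.le
  · show r * (∫ s in ρb..r, f s) ≤ 3*a*γ*(3/2)^(γ-1) * ρb ^ (γ - 2) * (r - ρb) ^ 2
    calc r * (∫ s in ρb..r, f s)
        ≤ r * (M' * (r - ρb)^2/2) := mul_le_mul_of_nonneg_left hIhi hr0.le
      _ ≤ (3*ρb/2) * (M' * (r - ρb)^2/2) := mul_le_mul_of_nonneg_right hr2 (by positivity)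
      _ = 3*a*γ*(3/2)^(γ-1) * ρb ^ (γ-2) * (r - ρb)^2 := by rw [← hkey]; ring
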